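/- Let R = MvPolynomial ℕ ℚ with variables x_1, x_2, x_3, …. In R[[t]], set A(t) = Σ_{j≥1} (x_j t^j / j)·(1 − (1−3t)^{−j}), which is a well-defined power series with zero constant term, so exp(A(t)) = Σ_{n≥0} A(t)^n/n! is a well-defined element of R[[t]]. Then the coefficient of t^4 in the power series −(1/3)·(1 − t/2)(1 − 3t/2)(1 − 5t/2)·exp(A(t)) equals the polynomial x_3 − (3/2)·x_1^2 + (5/4)·x_1. (This is the coefficient computation establishing 𝔭_3^# = 𝔭_3 − (3/2)𝔭_1^2 + (5/4)𝔭_1 in the proof of Lemma 2.1(b).) -/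

import Mathlib

set_option maxHeartbeats 2000000


/-!
STATEMENT 0. `R = MvPolynomial ℕ ℚ` with variables `x j = MvPolynomial.X j`.
In `R[[t]]`, `u` is the inverse of `1 - 3t`, so `u ^ j = (1 - 3t)⁻ʲ`.
`A` is the t-adically convergent sum `A(t) = Σ_{j ≥ 1} (x_j t^j / j)(1 - (1-3t)^{-j})`:
since the `j`-th summand has t-adic order `≥ j + 1`, the coefficient of `t^n` in `A`
is the (finite) sum of the coefficients of `t^n` of the summands with `1 ≤ j ≤ n`.
`E` is the t-adically convergent sum `exp (A(t)) = Σ_{k ≥ 0} A(t)^k / k!`: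
since `A` has zero constant term, `A ^ k` has order `≥ k` and the coefficient of `t^n`
in `E` is the (finite) sum over `0 ≤ k ≤ n` of `(k!)⁻¹ ·` (coefficient of `t^n` in `A ^ k`).
Conclusion: the coefficient of `t^4` in
`-(1/3)(1 - t/2)(1 - 3t/2)(1 - 5t/2) exp(A(t))` is `x₃ - (3/2) x₁² + (5/4) x₁`.
-/
theorem stmt0
    (u A E : PowerSeries (MvPolynomial ℕ ℚ))
    (hu : (1 - 3 * (PowerSeries.X : PowerSeries (MvPolynomial ℕ ℚ))) * u = 1)
    (hA : ∀ n : ℕ, PowerSeries.coeff (R := MvPolynomial ℕ ℚ) n A =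
      ∑ j ∈ Finset.Icc 1 n, PowerSeries.coeff (R := MvPolynomial ℕ ℚ) n
        (PowerSeries.C (R := MvPolynomial ℕ ℚ)
            (MvPolynomial.C ((j : ℚ)⁻¹) * MvPolynomial.X j) *
          (PowerSeries.X : PowerSeries (MvPolynomial ℕ ℚ)) ^ j * (1 - u ^ j)))
    (hE : ∀ n : ℕ, PowerSeries.coeff (R := MvPolynomial ℕ ℚ) n E =
      ∑ k ∈ Finset.range (n + 1),
        MvPolynomial.C ((k.factorial : ℚ)⁻¹) *
          PowerSeries.coeff (R := MvPolynomial ℕ ℚ) n (A ^ k)) :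
    PowerSeries.coeff (R := MvPolynomial ℕ ℚ) 4
      (-(PowerSeries.C (R := MvPolynomial ℕ ℚ) (MvPolynomial.C (1/3 : ℚ))) *
        (1 - PowerSeries.C (R := MvPolynomial ℕ ℚ) (MvPolynomial.C (1/2 : ℚ)) * PowerSeries.X) *
        (1 - PowerSeries.C (R := MvPolynomial ℕ ℚ) (MvPolynomial.C (3/2 : ℚ)) * PowerSeries.X) *
        (1 - PowerSeries.C (R := MvPolynomial ℕ ℚ) (MvPolynomial.C (5/2 : ℚ)) * PowerSeries.X) * E)
      = MvPolynomial.X 3 - MvPolynomial.C (3/2 : ℚ) * (MvPolynomial.X 1) ^ 2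
          + MvPolynomial.C (5/4 : ℚ) * MvPolynomial.X 1 := by
  have cmul : ∀ (φ ψ : PowerSeries (MvPolynomial ℕ ℚ)) (n : ℕ), PowerSeries.coeff (R := MvPolynomial ℕ ℚ) n (φ * ψ) =
      ∑ k ∈ Finset.range (n+1), PowerSeries.coeff (R := MvPolynomial ℕ ℚ) k φ * PowerSeries.coeff (R := MvPolynomial ℕ ℚ) (n-k) ψ := by
    intro φ ψ n
    rw [PowerSeries.coeff_mul, Finset.Nat.sum_antidiagonal_eq_sum_range_succ_mk]
  have h3 : (PowerSeries.C (R := MvPolynomial ℕ ℚ) 3) = (3 : PowerSeries (MvPolynomial ℕ ℚ)) := by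
    exact map_ofNat (PowerSeries.C (R := MvPolynomial ℕ ℚ)) 3
  have hu' : u = 1 + PowerSeries.C (R := MvPolynomial ℕ ℚ) 3 * (PowerSeries.X * u) := by
    rw [h3]; linear_combination hu
  have hu0 : PowerSeries.coeff (R := MvPolynomial ℕ ℚ) 0 u = 1 := by
    conv_lhs => rw [hu']
    simp
  have hun : ∀ n : ℕ, PowerSeries.coeff (R := MvPolynomial ℕ ℚ) (n+1) u = 3 * PowerSeries.coeff (R := MvPolynomial ℕ ℚ) n u := by
    intro n
    conv_lhs => rw [hu']
    simp [PowerSeries.coeff_succ_X_mul]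
  have hu1 : PowerSeries.coeff (R := MvPolynomial ℕ ℚ) 1 u = 3 := by simpa [hu0] using hun 0
  have hu2 : PowerSeries.coeff (R := MvPolynomial ℕ ℚ) 2 u = 9 := by have := hun 1; rw [hu1] at this; norm_num at this; exact this
  have hu3 : PowerSeries.coeff (R := MvPolynomial ℕ ℚ) 3 u = 27 := by have := hun 2; rw [hu2] at this; norm_num at this; exact this
  have hp0 : ∀ j : ℕ, PowerSeries.coeff (R := MvPolynomial ℕ ℚ) 0 (u ^ j) = 1 := by
    intro j
    rw [PowerSeries.coeff_zero_eq_constantCoeff, map_pow]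
    rw [← PowerSeries.coeff_zero_eq_constantCoeff, hu0, one_pow]
  have hu21 : PowerSeries.coeff (R := MvPolynomial ℕ ℚ) 1 (u^2) = 6 := by
    rw [pow_two, cmul]; simp [Finset.sum_range_succ, hu0, hu1]; ring
  have hu22 : PowerSeries.coeff (R := MvPolynomial ℕ ℚ) 2 (u^2) = 27 := by
    rw [pow_two, cmul]; simp [Finset.sum_range_succ, hu0, hu1, hu2]; ring
  have hu31 : PowerSeries.coeff (R := MvPolynomial ℕ ℚ) 1 (u^3) = 9 := by
    rw [pow_succ, cmul]; simp [Finset.sum_range_succ, hu0, hu1, hp0, hu21]; ring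
  have cA0 : PowerSeries.coeff (R := MvPolynomial ℕ ℚ) 0 A = 0 := by
    rw [hA 0]; simp
  have cA1 : PowerSeries.coeff (R := MvPolynomial ℕ ℚ) 1 A = 0 := by
    rw [hA 1]
    simp [Finset.sum_Icc_succ_top, Finset.Icc_self, Finset.sum_singleton, pow_one, Finset.sum_range_succ, mul_assoc,
      PowerSeries.coeff_C_mul, cmul, PowerSeries.coeff_X_pow, hu0, hp0]
  have cA2 : PowerSeries.coeff (R := MvPolynomial ℕ ℚ) 2 A = MvPolynomial.C (-3:ℚ) * MvPolynomial.X 1 := by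
    rw [hA 2]
    simp [Finset.sum_Icc_succ_top, Finset.Icc_self, Finset.sum_singleton, pow_one, Finset.sum_range_succ, mul_assoc,
      PowerSeries.coeff_C_mul, cmul, PowerSeries.coeff_X_pow, hu0, hu1, hu2, hp0, hu21, map_ofNat]
    ring
  have cA3 : PowerSeries.coeff (R := MvPolynomial ℕ ℚ) 3 A =
      MvPolynomial.C (-9:ℚ) * MvPolynomial.X 1 + MvPolynomial.C (-3:ℚ) * MvPolynomial.X 2 := by
    rw [hA 3]
    simp [Finset.sum_Icc_succ_top, Finset.Icc_self, Finset.sum_singleton, pow_one, Finset.sum_range_succ, mul_assoc,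
      PowerSeries.coeff_C_mul, cmul, PowerSeries.coeff_X_pow, hu0, hu1, hu2, hp0, hu21, map_ofNat]
    have h6 : (MvPolynomial.C ((2:ℚ)⁻¹) : MvPolynomial ℕ ℚ) * 6 = 3 := by
      rw [show (6:MvPolynomial ℕ ℚ) = MvPolynomial.C (6:ℚ) from (map_ofNat _ 6).symm, ← map_mul]; norm_num [map_ofNat]
    linear_combination (-(MvPolynomial.X 2 : MvPolynomial ℕ ℚ)) * h6
  have cA4 : PowerSeries.coeff (R := MvPolynomial ℕ ℚ) 4 A =
      MvPolynomial.C (-27:ℚ) * MvPolynomial.X 1 - MvPolynomial.C (27/2:ℚ) * MvPolynomial.X 2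
        + MvPolynomial.C (-3:ℚ) * MvPolynomial.X 3 := by
    rw [hA 4]
    simp [Finset.sum_Icc_succ_top, Finset.Icc_self, Finset.sum_singleton, pow_one, Finset.sum_range_succ, mul_assoc,
      PowerSeries.coeff_C_mul, cmul, PowerSeries.coeff_X_pow, hu0, hu1, hu2, hu3, hp0, hu21, hu22, hu31, map_ofNat]
    have h2 : (MvPolynomial.C ((2:ℚ)⁻¹) : MvPolynomial ℕ ℚ) * 27 = MvPolynomial.C (27/2 : ℚ) := by
      rw [show (27:MvPolynomial ℕ ℚ) = MvPolynomial.C (27:ℚ) from (map_ofNat _ 27).symm, ← map_mul]; norm_num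
    have h9 : (MvPolynomial.C ((3:ℚ)⁻¹) : MvPolynomial ℕ ℚ) * 9 = 3 := by
      rw [show (9:MvPolynomial ℕ ℚ) = MvPolynomial.C (9:ℚ) from (map_ofNat _ 9).symm, ← map_mul]; norm_num [map_ofNat]
    linear_combination (-(MvPolynomial.X 2 : MvPolynomial ℕ ℚ)) * h2 + (-(MvPolynomial.X 3 : MvPolynomial ℕ ℚ)) * h9
  have hC1 : ∀ q : ℚ, (MvPolynomial.C q : MvPolynomial ℕ ℚ) = q • 1 := by
    intro q; rw [MvPolynomial.smul_eq_C_mul, mul_one]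
  -- powers of A
  have cA20 : PowerSeries.coeff (R := MvPolynomial ℕ ℚ) 0 (A^2) = 0 := by
    rw [pow_two, cmul]; simp [Finset.sum_range_succ, cA0]
  have cA21 : PowerSeries.coeff (R := MvPolynomial ℕ ℚ) 1 (A^2) = 0 := by
    rw [pow_two, cmul]; simp [Finset.sum_range_succ, cA0, cA1]
  have cA22 : PowerSeries.coeff (R := MvPolynomial ℕ ℚ) 2 (A^2) = 0 := by
    rw [pow_two, cmul]; simp [Finset.sum_range_succ, cA0, cA1]
  have cA23 : PowerSeries.coeff (R := MvPolynomial ℕ ℚ) 3 (A^2) = 0 := by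
    rw [pow_two, cmul]; simp [Finset.sum_range_succ, cA0, cA1]
  have cA24 : PowerSeries.coeff (R := MvPolynomial ℕ ℚ) 4 (A^2) = MvPolynomial.C (9:ℚ) * (MvPolynomial.X 1)^2 := by
    rw [pow_two, cmul]; simp [Finset.sum_range_succ, cA0, cA1, cA2, cA3]
    try ring_nf
    try simp only [hC1, ← map_ofNat (MvPolynomial.C : ℚ →+* MvPolynomial ℕ ℚ), smul_mul_assoc, mul_smul_comm,
      smul_smul, mul_one, one_mul, mul_pow, smul_pow, one_pow]
    match_scalars <;> norm_num
  have cA3k : ∀ k ≤ 4, PowerSeries.coeff (R := MvPolynomial ℕ ℚ) k (A^3) = 0 := by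
    intro k hk
    interval_cases k <;>
      (rw [pow_succ, cmul]; simp [Finset.sum_range_succ, cA20, cA21, cA22, cA23, cA0])
  have cA44 : PowerSeries.coeff (R := MvPolynomial ℕ ℚ) 4 (A^4) = 0 := by
    rw [pow_succ, cmul]
    simp [Finset.sum_range_succ, cA3k 0 (by norm_num), cA3k 1 (by norm_num), cA3k 2 (by norm_num),
      cA3k 3 (by norm_num), cA3k 4 (by norm_num)]
  -- E coefficients
  have e0 : PowerSeries.coeff (R := MvPolynomial ℕ ℚ) 0 E = 1 := by
    rw [hE 0]; simp [Finset.sum_range_succ]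
  have e1 : PowerSeries.coeff (R := MvPolynomial ℕ ℚ) 1 E = 0 := by
    rw [hE 1]; simp [Finset.sum_range_succ, cA1]
  have e2 : PowerSeries.coeff (R := MvPolynomial ℕ ℚ) 2 E = MvPolynomial.C (-3:ℚ) * MvPolynomial.X 1 := by
    rw [hE 2]; simp [Finset.sum_range_succ, cA2, cA22]
  have e3 : PowerSeries.coeff (R := MvPolynomial ℕ ℚ) 3 E =
      MvPolynomial.C (-9:ℚ) * MvPolynomial.X 1 + MvPolynomial.C (-3:ℚ) * MvPolynomial.X 2 := by
    rw [hE 3]; simp [Finset.sum_range_succ, cA3, cA23, cA3k 3 (by norm_num)]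
  have e4 : PowerSeries.coeff (R := MvPolynomial ℕ ℚ) 4 E =
      MvPolynomial.C (-27:ℚ) * MvPolynomial.X 1 - MvPolynomial.C (27/2:ℚ) * MvPolynomial.X 2
        + MvPolynomial.C (-3:ℚ) * MvPolynomial.X 3
        + MvPolynomial.C (9/2:ℚ) * (MvPolynomial.X 1)^2 := by
    rw [hE 4]
    simp [Finset.sum_range_succ, cA4, cA24, cA3k 4 (by norm_num), cA44, Nat.factorial]
    try ring_nf
    try simp only [hC1, ← map_ofNat (MvPolynomial.C : ℚ →+* MvPolynomial ℕ ℚ), smul_mul_assoc, mul_smul_comm,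
      smul_smul, mul_one, one_mul, mul_pow, smul_pow, one_pow]
    match_scalars <;> norm_num
  rw [cmul]
  simp [cmul, Finset.sum_range_succ, e0, e1, e2, e3, e4, PowerSeries.coeff_one,
    PowerSeries.coeff_C_mul, PowerSeries.coeff_X, map_sub, map_neg, PowerSeries.coeff_C]
  try ring_nf
  try simp only [hC1, ← map_ofNat (MvPolynomial.C : ℚ →+* MvPolynomial ℕ ℚ), smul_mul_assoc, mul_smul_comm,
    smul_smul, mul_one, one_mul, mul_pow, smul_pow, one_pow]
  match_scalars <;> norm_num
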